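/- arXiv:2110.13649 — 4 statements merged into one kernel-verified Lean document; each statement's English description precedes it below -/
import Mathlib

section
/- For the Borel distribution with parameter μ ∈ (0,1), the probabilities sum to one: ∑_{n≥1} e^{-μn} (μn)^{n-1}/n! = 1. -/
open Finset

lemma altsum : ∀ (N : ℕ), ∀ k, k < N →
    ∑ i ∈ Finset.range (N+1), (-1:ℝ)^i * (N.choose i) * (i:ℝ)^k = 0 := by
  intro N
  induction N with
  | zero => intro k hk; exact absurd hk k.not_lt_zero
  | succ N ih =>
    intro k hk
    set g : ℕ → ℝ := fun i => (-1:ℝ)^i * (N.choose i) * (i:ℝ)^k with hg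
    set a : ℕ → ℝ := fun i => (-1:ℝ)^i * (N.choose i) * ((i:ℝ)+1)^k with ha
    set b : ℕ → ℝ := fun i => (-1:ℝ)^i * (N.choose (i+1)) * ((i:ℝ)+1)^k with hb
    have key : ∑ i ∈ range (N+1+1), (-1:ℝ)^i * ((N+1).choose i) * (i:ℝ)^k
        = ∑ i ∈ range (N+1), (g i - a i) := by
      rw [Finset.sum_range_succ' (fun i => (-1:ℝ)^i * ((N+1).choose i) * (i:ℝ)^k) (N+1)]
      have h2 : ∀ i ∈ range (N+1), (-1:ℝ)^(i+1) * (((N+1).choose (i+1) : ℕ) : ℝ) * ((i+1:ℕ):ℝ)^k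
          = (-(a i)) + (-(b i)) := by
        intro i _
        rw [Nat.choose_succ_succ, ha, hb]
        push_cast
        ring
      rw [Finset.sum_congr rfl h2, Finset.sum_add_distrib]
      have h5 : ∑ i ∈ range (N+1), (-(b i)) = (∑ i ∈ range (N+1), g i) - g 0 := by
        have h6 : ∀ i ∈ range (N+1), -(b i) = g (i+1) := by
          intro i _
          rw [hb, hg]
          push_cast
          ring
        rw [Finset.sum_congr rfl h6]
        have h7 := Finset.sum_range_succ' g (N+1)
        rw [Finset.sum_range_succ g (N+1)] at h7
        have h8 : g (N+1) = 0 := by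
          simp [hg, Nat.choose_succ_self]
        rw [h8, add_zero] at h7
        linarith
      rw [h5]
      have h9 : (-1:ℝ)^0 * (((N+1).choose 0 : ℕ):ℝ) * ((0:ℕ):ℝ)^k = g 0 := by
        simp [hg]
      rw [h9, Finset.sum_sub_distrib, Finset.sum_neg_distrib]
      ring
    rw [key]
    have hkN : k ≤ N := Nat.lt_succ_iff.mp hk
    have expand : ∀ i ∈ range (N+1), g i - a i
        = -∑ l ∈ range k, (k.choose l : ℝ) * ((-1:ℝ)^i * (N.choose i) * (i:ℝ)^l) := by
      intro i _
      have hpow : ((i:ℝ)+1)^k = (∑ l ∈ range k, (i:ℝ)^l * (k.choose l)) + (i:ℝ)^k := by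
        rw [add_pow]
        rw [Finset.sum_range_succ]
        simp [Nat.choose_self]
      have h10 : g i - a i = -((-1:ℝ)^i * (N.choose i) * (∑ l ∈ range k, (i:ℝ)^l * (k.choose l))) := by
        simp only [hg, ha]
        rw [hpow]
        ring
      rw [h10, Finset.mul_sum, neg_inj]
      exact Finset.sum_congr rfl fun l _ => by ring
    rw [Finset.sum_congr rfl expand, Finset.sum_neg_distrib, neg_eq_zero, Finset.sum_comm]
    apply Finset.sum_eq_zero
    intro l hl
    rw [← Finset.mul_sum, ih l (lt_of_lt_of_le (Finset.mem_range.mp hl) hkN), mul_zero]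



noncomputable def borelTerm (m : ℕ) (z : ℂ) : ℂ :=
  Complex.exp (-(z*((m:ℂ)+1))) * (z*((m:ℂ)+1))^m / ((m+1).factorial : ℂ)

noncomputable def Sc (z : ℂ) : ℂ := ∑' m, borelTerm m z

lemma real_exp_tsum (x : ℝ) : ∑' j : ℕ, x^j / (j.factorial : ℝ) = Real.exp x := by
  rw [Real.exp_eq_exp_ℝ, NormedSpace.exp_eq_tsum_div]

lemma pow_succ_le (m : ℕ) : ((m:ℝ)+1)^(m+1) ≤ Real.exp ((m:ℝ)+1) * ((m+1).factorial : ℝ) := by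
  have h := Real.pow_div_factorial_le_exp (x := ((m:ℝ)+1)) (by positivity) (m+1)
  have hf : (0:ℝ) < ((m+1).factorial : ℝ) := by positivity
  rw [div_le_iff₀ hf] at h
  exact_mod_cast h

lemma borelTerm_norm_le {z : ℂ} {q : ℝ} (hq : ‖z‖ * Real.exp (1 - z.re) ≤ q) (m : ℕ) :
    ‖borelTerm m z‖ ≤ Real.exp (1 - z.re) * q^m := by
  have hq0 : 0 ≤ ‖z‖ * Real.exp (1 - z.re) := by positivity
  have hnorm : ‖borelTerm m z‖
      = Real.exp (-(z.re*((m:ℝ)+1))) * (‖z‖ * ((m:ℝ)+1))^m / ((m+1).factorial : ℝ) := by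
    unfold borelTerm
    rw [norm_div, norm_mul]
    have h1 : ‖Complex.exp (-(z*((m:ℂ)+1)))‖ = Real.exp (-(z.re*((m:ℝ)+1))) := by
      rw [Complex.norm_exp]
      congr 1
      simp [Complex.neg_re, Complex.mul_re]
    have h2 : ‖(z*((m:ℂ)+1))^m‖ = (‖z‖ * ((m:ℝ)+1))^m := by
      rw [norm_pow, norm_mul]
      congr 2
      rw [show ((m:ℂ)+1) = ((((m:ℝ)+1) : ℝ) : ℂ) by push_cast; ring, Complex.norm_real, Real.norm_eq_abs]
      rw [abs_of_nonneg (by positivity)]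
    rw [h1, h2]
    congr 1
    simp [Complex.norm_natCast]
  rw [hnorm]
  have hfac : (0:ℝ) < ((m+1).factorial : ℝ) := by positivity
  have hm1 : (1:ℝ) ≤ (m:ℝ)+1 := by have := Nat.cast_nonneg (α:=ℝ) m; linarith
  have key : Real.exp (-(z.re*((m:ℝ)+1))) * (‖z‖ * ((m:ℝ)+1))^m / ((m+1).factorial : ℝ)
      ≤ Real.exp (-(z.re*((m:ℝ)+1))) * ‖z‖ ^ m * Real.exp ((m:ℝ)+1) := by
    rw [div_le_iff₀ hfac, mul_pow]
    have h3 : ((m:ℝ)+1)^m ≤ Real.exp ((m:ℝ)+1) * ((m+1).factorial : ℝ) / ((m:ℝ)+1) := by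
      rw [le_div_iff₀ (by positivity)]
      calc ((m:ℝ)+1)^m * ((m:ℝ)+1) = ((m:ℝ)+1)^(m+1) := by ring
        _ ≤ Real.exp ((m:ℝ)+1) * ((m+1).factorial : ℝ) := pow_succ_le m
    calc Real.exp (-(z.re*((m:ℝ)+1))) * (‖z‖ ^ m * ((m:ℝ)+1)^m)
        ≤ Real.exp (-(z.re*((m:ℝ)+1))) * (‖z‖ ^ m * (Real.exp ((m:ℝ)+1) * ((m+1).factorial : ℝ) / ((m:ℝ)+1))) := by
          apply mul_le_mul_of_nonneg_left _ (Real.exp_nonneg _)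
          exact mul_le_mul_of_nonneg_left h3 (by positivity)
      _ = (Real.exp (-(z.re*((m:ℝ)+1))) * ‖z‖ ^ m * Real.exp ((m:ℝ)+1) * ((m+1).factorial : ℝ)) / ((m:ℝ)+1) := by
          ring
      _ ≤ Real.exp (-(z.re*((m:ℝ)+1))) * ‖z‖ ^ m * Real.exp ((m:ℝ)+1) * ((m+1).factorial : ℝ) := by
          apply div_le_self (by positivity) hm1
  refine key.trans ?_
  have h5 : Real.exp (-(z.re*((m:ℝ)+1))) * ‖z‖ ^ m * Real.exp ((m:ℝ)+1)
      = Real.exp (1-z.re) * (‖z‖ * Real.exp (1-z.re))^m := by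
    rw [mul_pow, ← Real.exp_nat_mul]
    have hcomb : Real.exp (-(z.re*((m:ℝ)+1))) * Real.exp ((m:ℝ)+1)
        = Real.exp (1-z.re) * Real.exp ((m:ℝ)*(1-z.re)) := by
      rw [← Real.exp_add, ← Real.exp_add]; ring_nf
    rw [mul_right_comm, hcomb]; ring
  rw [h5]
  exact mul_le_mul_of_nonneg_left (pow_le_pow_left₀ hq0 hq m) (Real.exp_nonneg _)

lemma summable_norm_borelTerm {z : ℂ} (h : ‖z‖ * Real.exp (1 - z.re) < 1) :
    Summable (fun m => ‖borelTerm m z‖) := by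
  have hq0 : 0 ≤ ‖z‖ * Real.exp (1 - z.re) := by positivity
  apply Summable.of_nonneg_of_le (fun m => norm_nonneg _)
    (fun m => borelTerm_norm_le le_rfl m)
  exact (summable_geometric_of_lt_one hq0 h).mul_left _

lemma summable_borelTerm {z : ℂ} (h : ‖z‖ * Real.exp (1 - z.re) < 1) :
    Summable (fun m => borelTerm m z) :=
  (summable_norm_borelTerm h).of_norm




section smallt
variable {t : ℝ}

noncomputable def aB : ℕ → ℝ := fun n => if n = 0 then 0 else (n:ℝ)^(n-1)/(n.factorial:ℝ)

noncomputable def GB (t : ℝ) : ℕ×ℕ → ℝ :=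
  fun p => aB p.1 * t^p.1 * (-(p.1:ℝ)*t)^p.2 / (p.2.factorial:ℝ)

lemma aB_nonneg (n : ℕ) : 0 ≤ aB n := by
  unfold aB; split <;> positivity

lemma aB_le (n : ℕ) : aB n ≤ Real.exp n := by
  unfold aB
  split
  · positivity
  · rename_i hn
    have hn1 : 1 ≤ n := Nat.one_le_iff_ne_zero.mpr hn
    have h1 : ((n:ℝ))^(n-1) ≤ ((n:ℝ))^n :=
      pow_le_pow_right₀ (by exact_mod_cast hn1) (Nat.sub_le n 1)
    have h2 := Real.pow_div_factorial_le_exp (x := (n:ℝ)) (by positivity) n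
    have hf : (0:ℝ) < (n.factorial : ℝ) := by positivity
    rw [div_le_iff₀ hf] at h2 ⊢
    calc ((n:ℝ))^(n-1) ≤ ((n:ℝ))^n := h1
      _ ≤ Real.exp n * n.factorial := h2

lemma GB_abs (ht : 0 ≤ t) (p : ℕ×ℕ) :
    |GB t p| = aB p.1 * t^p.1 * ((p.1:ℝ)*t)^p.2 / (p.2.factorial:ℝ) := by
  unfold GB
  rw [abs_div, abs_mul, abs_mul, abs_pow, abs_pow, neg_mul, abs_neg]
  rw [abs_of_nonneg (aB_nonneg _), abs_of_nonneg ht,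
    abs_of_nonneg (by positivity : (0:ℝ) ≤ (p.1:ℝ)*t),
    abs_of_nonneg (by positivity : (0:ℝ) ≤ ((p.2.factorial : ℕ):ℝ))]

lemma GB_row_bound (ht : 0 ≤ t) (n : ℕ) :
    aB n * t^n * Real.exp (n*t) ≤ (t * Real.exp (t+1))^n := by
  have h1 : aB n * t^n * Real.exp (n*t) ≤ Real.exp n * t^n * Real.exp (n*t) := by
    have := aB_le n
    have h2 : (0:ℝ) ≤ t^n * Real.exp (n*t) := by positivity
    nlinarith [Real.exp_pos (n*t), pow_nonneg ht n]
  refine h1.trans (le_of_eq ?_)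
  rw [mul_pow, ← Real.exp_nat_mul, mul_comm (Real.exp ↑n * t ^ n) _, ← mul_assoc]
  rw [mul_comm (Real.exp ((n:ℝ)*t)) (Real.exp ↑n), ← Real.exp_add]
  rw [show (n:ℝ) + (n:ℝ)*t = (n:ℝ)*(t+1) by ring, Real.exp_nat_mul]
  ring

lemma GB_summable_abs (ht : 0 < t) (hr : t * Real.exp (t+1) < 1) :
    Summable (fun p => |GB t p|) := by
  have hr0 : 0 ≤ t * Real.exp (t+1) := by positivity
  rw [summable_prod_of_nonneg (fun p => abs_nonneg _)]
  constructor
  · intro n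
    apply Summable.congr ((Real.summable_pow_div_factorial ((n:ℝ)*t)).mul_left (aB n * t^n))
    intro j
    rw [GB_abs ht.le]
    ring
  · apply Summable.of_nonneg_of_le (fun n => tsum_nonneg (fun j => abs_nonneg _))
      (fun n => ?_) (summable_geometric_of_lt_one hr0 hr)
    have hrow : ∑' j, |GB t (n, j)| = aB n * t^n * Real.exp ((n:ℝ)*t) := by
      rw [tsum_congr (fun j => GB_abs ht.le (n, j))]
      rw [tsum_congr (fun j => by rw [mul_div_assoc] :
        ∀ j:ℕ, aB n * t^n * ((n:ℝ)*t)^j / (j.factorial:ℝ) = aB n * t^n * (((n:ℝ)*t)^j / (j.factorial:ℝ)))]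
      rw [tsum_mul_left, real_exp_tsum]
    rw [hrow]
    exact GB_row_bound ht.le n

end smallt

lemma GB_antidiagonal_sum (ht : 0 < t) (N : ℕ) :
    ∑ x ∈ Finset.HasAntidiagonal.antidiagonal N, GB t x = if N = 1 then t else 0 := by
  rw [Finset.Nat.sum_antidiagonal_eq_sum_range_succ_mk]
  match N with
  | 0 => simp [GB, aB]
  | 1 => norm_num [Finset.sum_range_succ, GB, aB]
  | (M+2) =>
    rw [if_neg (by omega)]
    have key : ∀ k ∈ range (M+2+1), GB t (k, M+2-k)
        = (t^(M+2) * (-1)^(M+2) / ((M+2).factorial : ℝ))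
          * ((-1:ℝ)^k * ((M+2).choose k : ℝ) * (k:ℝ)^(M+1)) := by
      intro k hk
      have hkM : k ≤ M+2 := by simpa using Nat.lt_succ_iff.mp (Finset.mem_range.mp hk)
      rcases Nat.eq_zero_or_pos k with hk0 | hkpos
      · subst hk0
        simp [GB, aB]
      · have hk1 : 1 ≤ k := hkpos
        unfold GB aB
        rw [if_neg (by omega)]
        have hsplit : (-(k:ℝ)*t)^(M+2-k) = (-1:ℝ)^(M+2-k) * (k:ℝ)^(M+2-k) * t^(M+2-k) := by
          rw [neg_mul, neg_pow, mul_pow]; ring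
        have hsign : (-1:ℝ)^(M+2-k) = (-1:ℝ)^(M+2) * (-1:ℝ)^k := by
          have h1 : (-1:ℝ)^(M+2-k) * (-1:ℝ)^k = (-1:ℝ)^(M+2) := by
            rw [← pow_add, Nat.sub_add_cancel hkM]
          have h2 : (-1:ℝ)^k * (-1:ℝ)^k = 1 := by
            rw [← pow_add, Even.neg_one_pow ⟨k, by ring⟩]
          calc (-1:ℝ)^(M+2-k) = (-1:ℝ)^(M+2-k) * ((-1:ℝ)^k * (-1:ℝ)^k) := by rw [h2, mul_one]
            _ = ((-1:ℝ)^(M+2-k) * (-1:ℝ)^k) * (-1:ℝ)^k := by ring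
            _ = (-1:ℝ)^(M+2) * (-1:ℝ)^k := by rw [h1]
        have hpowk : (k:ℝ)^(k-1) * (k:ℝ)^(M+2-k) = (k:ℝ)^(M+1) := by
          rw [← pow_add]; congr 1; omega
        have hpowt : t^k * t^(M+2-k) = t^(M+2) := by
          rw [← pow_add]; congr 1; omega
        have hCF : (((M+2).choose k : ℕ):ℝ) * (k.factorial:ℝ) * (((M+2-k).factorial : ℕ):ℝ)
            = (((M+2).factorial : ℕ):ℝ) := by
          exact_mod_cast congrArg (Nat.cast : ℕ → ℝ) (Nat.choose_mul_factorial_mul_factorial hkM)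
        have hkf : ((k.factorial:ℕ):ℝ) ≠ 0 := by positivity
        have hMkf : (((M+2-k).factorial:ℕ):ℝ) ≠ 0 := by positivity
        have hMf : (((M+2).factorial:ℕ):ℝ) ≠ 0 := by positivity
        rw [hsplit, hsign]
        field_simp
        rw [← hCF, ← hpowk, ← hpowt]
        ring
    rw [Finset.sum_congr rfl key, ← Finset.mul_sum]
    have := altsum (M+2) (M+1) (by omega)
    rw [this, mul_zero]

lemma r_lt_one (ht : 0 < t) (h8 : t < 1/8) : t * Real.exp (t+1) < 1 := by
  have he : Real.exp (t+1) < Real.exp 2 := Real.exp_lt_exp.mpr (by linarith)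
  have he2 : Real.exp 2 < 7.4 := by
    have h1 := Real.exp_one_lt_d9
    have h0 := Real.exp_pos 1
    calc Real.exp 2 = Real.exp 1 * Real.exp 1 := by rw [← Real.exp_add]; norm_num
      _ < 7.4 := by nlinarith
  nlinarith [Real.exp_pos (t+1)]

set_option maxHeartbeats 1000000 in
lemma small_t (ht : 0 < t) (h8 : t < 1/8) :
    ∑' m:ℕ, Real.exp (-(t*((m:ℝ)+1))) * (t*((m:ℝ)+1))^m / (((m+1).factorial : ℕ) : ℝ) = 1 := by
  have hr := r_lt_one ht h8
  have habs := GB_summable_abs ht hr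
  have hG : Summable (GB t) := summable_abs_iff.mp habs
  -- row sums
  have hrow_sum : ∀ n : ℕ, Summable (fun j => GB t (n, j)) := by
    intro n
    apply Summable.congr ((Real.summable_pow_div_factorial (-(n:ℝ)*t)).mul_left (aB n * t^n))
    intro j
    unfold GB
    ring
  -- Eq1 : tsum = t * target
  have inner : ∀ n : ℕ, ∑' j, GB t (n, j) = aB n * t^n * Real.exp (-((n:ℝ)*t)) := by
    intro n
    have : ∀ j:ℕ, GB t (n,j) = aB n * t^n * ((-((n:ℝ)*t))^j / (j.factorial:ℝ)) := by
      intro j; unfold GB; ring_nf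
    rw [tsum_congr this, tsum_mul_left, real_exp_tsum]
  have houter : Summable (fun n => aB n * t^n * Real.exp (-((n:ℝ)*t))) := by
    apply Summable.of_nonneg_of_le
      (fun n => mul_nonneg (mul_nonneg (aB_nonneg n) (pow_nonneg ht.le n)) (Real.exp_nonneg _))
      (fun n => ?_) (summable_geometric_of_lt_one (by positivity) hr)
    calc aB n * t^n * Real.exp (-((n:ℝ)*t)) ≤ aB n * t^n * Real.exp ((n:ℝ)*t) := by
          have h1 : Real.exp (-((n:ℝ)*t)) ≤ Real.exp ((n:ℝ)*t) :=
            Real.exp_le_exp.mpr (by nlinarith [Nat.cast_nonneg (α := ℝ) n])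
          have h2 : 0 ≤ aB n * t^n := mul_nonneg (aB_nonneg n) (pow_nonneg ht.le n)
          nlinarith
      _ ≤ (t * Real.exp (t+1))^n := GB_row_bound ht.le n
  have eq1 : ∑' p, GB t p
      = t * ∑' m:ℕ, Real.exp (-(t*((m:ℝ)+1))) * (t*((m:ℝ)+1))^m / (((m+1).factorial : ℕ) : ℝ) := by
    rw [Summable.tsum_prod' hG hrow_sum, tsum_congr inner, Summable.tsum_eq_zero_add houter]
    have h0 : aB 0 * t^0 * Real.exp (-((0:ℝ)*t)) = 0 := by simp [aB]
    have hshift : ∀ m:ℕ, aB (m+1) * t^(m+1) * Real.exp (-((((m+1:ℕ)):ℝ)*t))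
        = t * (Real.exp (-(t*((m:ℝ)+1))) * (t*((m:ℝ)+1))^m / (((m+1).factorial : ℕ) : ℝ)) := by
      intro m
      unfold aB
      rw [if_neg (Nat.succ_ne_zero m)]
      have hc : (((m+1:ℕ)):ℝ) = (m:ℝ)+1 := by push_cast; ring
      rw [hc]
      have h1 : ((m+1) - 1 : ℕ) = m := rfl
      rw [h1]
      have h2 : -(((m:ℝ)+1)*t) = -(t*((m:ℝ)+1)) := by ring
      rw [h2]
      rw [mul_pow]
      field_simp
      ring
    simp only [Nat.cast_zero]
    rw [h0, zero_add, tsum_congr hshift, tsum_mul_left]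
  -- Eq2 : tsum = t
  have eq2 : ∑' p, GB t p = t := by
    rw [← (Finset.HasAntidiagonal.sigmaAntidiagonalEquivProd (A := ℕ)).tsum_eq (GB t)]
    have hsig : Summable (fun σ : (Σ n : ℕ, Finset.HasAntidiagonal.antidiagonal n) => GB t (Finset.HasAntidiagonal.sigmaAntidiagonalEquivProd σ)) :=
      (Equiv.summable_iff _).mpr hG
    rw [Summable.tsum_sigma hsig]
    have hinner : ∀ N : ℕ, ∑' (c : Finset.HasAntidiagonal.antidiagonal N), GB t (Finset.HasAntidiagonal.sigmaAntidiagonalEquivProd ⟨N, c⟩)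
        = if N = 1 then t else 0 := by
      intro N
      have : ∀ c : Finset.HasAntidiagonal.antidiagonal N, GB t (Finset.HasAntidiagonal.sigmaAntidiagonalEquivProd ⟨N, c⟩) = GB t c := by
        intro c; rfl
      rw [tsum_congr this, Finset.tsum_subtype (Finset.HasAntidiagonal.antidiagonal N) (GB t)]
      exact GB_antidiagonal_sum ht N
    rw [tsum_congr hinner, tsum_ite_eq]
  have htne : t ≠ 0 := ne_of_gt ht
  apply mul_left_cancel₀ htne
  rw [← eq1, eq2, mul_one]




def UB : Set ℂ := {z | ‖z‖ * Real.exp (1 - z.re) < 1 ∧ z.re < 1}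

lemma continuous_hB : Continuous (fun z : ℂ => ‖z‖ * Real.exp (1 - z.re)) :=
  continuous_norm.mul (Real.continuous_exp.comp (continuous_const.sub Complex.continuous_re))

lemma isOpen_UB : IsOpen UB :=
  (isOpen_lt continuous_hB continuous_const).inter (isOpen_lt Complex.continuous_re continuous_const)

lemma Sc_diffOn : DifferentiableOn ℂ Sc {z : ℂ | ‖z‖ * Real.exp (1 - z.re) < 1} := by
  intro x hx
  simp only [Set.mem_setOf_eq] at hx
  set q : ℝ := (1 + ‖x‖ * Real.exp (1 - x.re))/2 with hqdef
  have hq0 : 0 ≤ q := by positivity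
  have hxq : ‖x‖ * Real.exp (1 - x.re) < q := by rw [hqdef]; linarith
  have hq1 : q < 1 := by rw [hqdef]; linarith
  set V : Set ℂ := {z | ‖z‖ * Real.exp (1 - z.re) < q ∧ x.re - 1 < z.re} with hVdef
  have hVopen : IsOpen V :=
    (isOpen_lt continuous_hB continuous_const).inter (isOpen_lt continuous_const Complex.continuous_re)
  have hxV : x ∈ V := ⟨hxq, by simp⟩
  have hdiff : DifferentiableOn ℂ (fun z => ∑' m, borelTerm m z) V := by
    apply Complex.differentiableOn_tsum_of_summable_norm
      (u := fun m : ℕ => Real.exp (2 - x.re) * q^m)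
      ((summable_geometric_of_lt_one hq0 hq1).mul_left _)
      (fun m => ?_) hVopen (fun m w hw => ?_)
    · apply Differentiable.differentiableOn
      apply Differentiable.div_const
      exact ((differentiable_id.mul_const _).neg.cexp.mul ((differentiable_id.mul_const _).pow _))
    · have hw1 : ‖w‖ * Real.exp (1 - w.re) ≤ q := le_of_lt hw.1
      refine (borelTerm_norm_le hw1 m).trans ?_
      have : Real.exp (1 - w.re) ≤ Real.exp (2 - x.re) := Real.exp_le_exp.mpr (by
        have := hw.2; linarith [hw.2])
      exact mul_le_mul_of_nonneg_right this (pow_nonneg hq0 m)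
  exact ((hdiff.differentiableAt (hVopen.mem_nhds hxV)).differentiableWithinAt)

lemma Sc_analytic : AnalyticOnNhd ℂ Sc UB := by
  have hsub : UB ⊆ {z : ℂ | ‖z‖ * Real.exp (1 - z.re) < 1} := fun z hz => hz.1
  exact (Sc_diffOn.mono hsub).analyticOnNhd isOpen_UB

lemma aux_xe {x : ℝ} (h0 : 0 ≤ x) (h1 : x < 1) : x * Real.exp (1-x) < 1 := by
  rcases eq_or_lt_of_le h0 with h | h
  · rw [← h]; simp [Real.exp_pos]
  · have hlog := Real.log_lt_sub_one_of_pos h (ne_of_lt h1)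
    calc x * Real.exp (1-x) = Real.exp (Real.log x) * Real.exp (1-x) := by rw [Real.exp_log h]
      _ = Real.exp (Real.log x + (1-x)) := by rw [Real.exp_add]
      _ < Real.exp 0 := Real.exp_lt_exp.mpr (by linarith)
      _ = 1 := Real.exp_zero

lemma mem_UB_real {x : ℝ} : (x:ℂ) ∈ UB ↔ |x| * Real.exp (1-x) < 1 ∧ x < 1 := by
  simp [UB, Complex.norm_real, Real.norm_eq_abs]

lemma real_mem_UB {x : ℝ} (h0 : 0 ≤ x) (h1 : x < 1) : (x:ℂ) ∈ UB := by
  constructor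
  · rw [Complex.norm_real, Real.norm_eq_abs, Complex.ofReal_re, abs_of_nonneg h0]
    exact aux_xe h0 h1
  · rwa [Complex.ofReal_re]

lemma vert_subset {z : ℂ} (hz : z ∈ UB) : segment ℝ z ((z.re:ℝ):ℂ) ⊆ UB := by
  rintro w ⟨s, u, hs, hu, hsu, rfl⟩
  have hre : (s • z + u • ((z.re:ℝ):ℂ)).re = z.re := by
    simp only [Complex.add_re, Complex.smul_re, Complex.ofReal_re, smul_eq_mul]
    linear_combination z.re * hsu
  have habs : ‖s • z + u • ((z.re:ℝ):ℂ)‖ ≤ ‖z‖ := by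
    calc ‖s • z + u • ((z.re:ℝ):ℂ)‖
        ≤ ‖s • z‖ + ‖u • ((z.re:ℝ):ℂ)‖ := norm_add_le _ _
      _ = |s| * ‖z‖ + |u| * |z.re| := by
          rw [norm_smul, norm_smul]
          simp [Complex.norm_real, Real.norm_eq_abs]
      _ ≤ s * ‖z‖ + u * ‖z‖ := by
          rw [abs_of_nonneg hs, abs_of_nonneg hu]
          have := Complex.abs_re_le_norm z
          nlinarith
      _ = ‖z‖ := by linear_combination ‖z‖ * hsu
  constructor
  · show ‖_‖ * Real.exp (1 - (s • z + u • ((z.re:ℝ):ℂ)).re) < 1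
    rw [hre]
    calc ‖s • z + u • ((z.re:ℝ):ℂ)‖ * Real.exp (1 - z.re)
        ≤ ‖z‖ * Real.exp (1 - z.re) :=
          mul_le_mul_of_nonneg_right habs (Real.exp_nonneg _)
      _ < 1 := hz.1
  · show (s • z + u • ((z.re:ℝ):ℂ)).re < 1
    rw [hre]; exact hz.2

lemma horiz_subset {z : ℂ} (hz : z ∈ UB) :
    segment ℝ ((z.re:ℝ):ℂ) (((1:ℝ)/2 : ℝ):ℂ) ⊆ UB := by
  rintro w ⟨s, u, hs, hu, hsu, rfl⟩
  set a : ℝ := z.re with hadef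
  have ha1 : a < 1 := hz.2
  have habs : |a| * Real.exp (1-a) < 1 := by
    calc |a| * Real.exp (1-a) ≤ ‖z‖ * Real.exp (1-z.re) :=
        mul_le_mul_of_nonneg_right (Complex.abs_re_le_norm z) (Real.exp_nonneg _)
      _ < 1 := hz.1
  have hw : s • ((a:ℝ):ℂ) + u • (((1:ℝ)/2 : ℝ):ℂ) = (((s*a + u*(1/2) : ℝ)):ℂ) := by
    rw [Complex.real_smul, Complex.real_smul]
    push_cast
    ring
  rw [hw]
  set x : ℝ := s*a + u*(1/2) with hxdef
  have hsa : s*a ≤ s := by nlinarith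
  have hx1 : x < 1 := by
    rcases eq_or_lt_of_le hu with hu0 | hu0
    · have hs1 : s = 1 := by linarith
      have hxa : x = a := by rw [hxdef, ← hu0, hs1]; ring
      linarith
    · rw [hxdef]; linarith
  have hxabs : |x| * Real.exp (1-x) < 1 := by
    rcases le_or_gt 0 x with hx0 | hx0
    · rw [abs_of_nonneg hx0]; exact aux_xe hx0 hx1
    · have ha0 : a < 0 := by
        by_contra hc
        push_neg at hc
        rw [hxdef] at hx0
        nlinarith [mul_nonneg hs hc]
      have hax : a ≤ x := by
        rw [hxdef]
        nlinarith [mul_nonneg hu (by linarith : (0:ℝ) ≤ 1/2 - a)]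
      rw [abs_of_neg hx0]
      have h1 : Real.exp (1-x) ≤ Real.exp (1-a) := Real.exp_le_exp.mpr (by linarith)
      have h2 : -x ≤ -a := by linarith
      calc -x * Real.exp (1-x) ≤ -a * Real.exp (1-a) := by
            nlinarith [Real.exp_pos (1-x), Real.exp_pos (1-a)]
        _ = |a| * Real.exp (1-a) := by rw [abs_of_neg ha0]
        _ < 1 := habs
  exact mem_UB_real.mpr ⟨hxabs, hx1⟩

lemma UB_preconnected : IsPreconnected UB := by
  have hhalf : ((1:ℂ)/2) = (((1:ℝ)/2 : ℝ):ℂ) := by push_cast; ring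
  set C : ℂ → Set ℂ :=
    fun z => segment ℝ z ((z.re:ℝ):ℂ) ∪ segment ℝ ((z.re:ℝ):ℂ) (((1:ℝ)/2 : ℝ):ℂ) with hC
  have hcover : UB = ⋃₀ (C '' UB) := by
    apply Set.Subset.antisymm
    · intro z hz
      exact ⟨C z, ⟨z, hz, rfl⟩, Or.inl (left_mem_segment ℝ z _)⟩
    · rintro w ⟨s, ⟨z, hz, rfl⟩, hw⟩
      rcases hw with h | h
      · exact vert_subset hz h
      · exact horiz_subset hz h
  rw [hcover]
  apply isPreconnected_sUnion ((1:ℂ)/2)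
  · rintro s ⟨z, hz, rfl⟩
    rw [hhalf]
    exact Or.inr (right_mem_segment ℝ _ _)
  · rintro s ⟨z, hz, rfl⟩
    apply IsPreconnected.union ((z.re:ℝ):ℂ)
    · exact right_mem_segment ℝ _ _
    · exact left_mem_segment ℝ _ _
    · exact (convex_segment _ _).isPreconnected
    · exact (convex_segment _ _).isPreconnected


lemma Sc_ofReal (t : ℝ) :
    Sc t = ((∑' m:ℕ, Real.exp (-(t*((m:ℝ)+1))) * (t*((m:ℝ)+1))^m / (((m+1).factorial : ℕ) : ℝ) : ℝ) : ℂ) := by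
  rw [Complex.ofReal_tsum]
  unfold Sc
  congr 1
  ext m
  unfold borelTerm
  push_cast
  ring

lemma Sc_eqOn_one : Set.EqOn Sc (fun _ => (1:ℂ)) UB := by
  apply AnalyticOnNhd.eqOn_of_preconnected_of_frequently_eq Sc_analytic
    (analyticOnNhd_const) UB_preconnected (z₀ := ((1/16 : ℝ) : ℂ))
    (real_mem_UB (by norm_num) (by norm_num))
  -- frequently
  have hseq : ∀ n : ℕ, Sc ((1/16 + 1/((n:ℝ)+17) : ℝ) : ℂ) = 1 := by
    intro n
    have hn0 : (0:ℝ) < (n:ℝ)+17 := by positivity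
    have ht0 : (0:ℝ) < 1/16 + 1/((n:ℝ)+17) := by positivity
    have ht8 : 1/16 + 1/((n:ℝ)+17) < 1/8 := by
      have : 1/((n:ℝ)+17) ≤ 1/17 := by
        apply div_le_div_of_nonneg_left (by norm_num) (by norm_num) (by
          have := Nat.cast_nonneg (α := ℝ) n; linarith)
      linarith
    rw [Sc_ofReal, small_t ht0 ht8, Complex.ofReal_one]
  have htend : Filter.Tendsto (fun n : ℕ => ((1/16 + 1/((n:ℝ)+17) : ℝ) : ℂ)) Filter.atTop
      (nhdsWithin ((1/16:ℝ):ℂ) {((1/16:ℝ):ℂ)}ᶜ) := by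
    apply tendsto_nhdsWithin_of_tendsto_nhds_of_eventually_within
    · apply Filter.Tendsto.comp (Complex.continuous_ofReal.tendsto _)
      have h17 : Filter.Tendsto (fun n:ℕ => ((n:ℝ)+17)) Filter.atTop Filter.atTop :=
        Filter.tendsto_atTop_add_const_right _ 17 tendsto_natCast_atTop_atTop
      have hz := h17.inv_tendsto_atTop
      have : Filter.Tendsto (fun n:ℕ => 1/16 + 1/((n:ℝ)+17)) Filter.atTop (nhds (1/16 + 0)) := by
        apply Filter.Tendsto.add tendsto_const_nhds
        simpa [one_div, Pi.inv_def] using hz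
      simpa using this
    · apply Filter.Eventually.of_forall
      intro n
      simp only [Set.mem_compl_iff, Set.mem_singleton_iff]
      intro hc
      have := Complex.ofReal_inj.mp hc
      have hn0 : (0:ℝ) < 1/((n:ℝ)+17) := by positivity
      linarith
  have hfreq : ∃ᶠ z in nhdsWithin ((1/16:ℝ):ℂ) {((1/16:ℝ):ℂ)}ᶜ, Sc z = (fun _ => (1:ℂ)) z := by
    apply htend.frequently
    apply Filter.Frequently.of_forall
    intro n
    exact hseq n
  exact hfreq

/-- For the Borel distribution with parameter `μ ∈ (0,1)`, the probabilities
`P(X = n) = e^{-μn} (μn)^{n-1}/n!`, `n ≥ 1`, sum to one.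
(The index `n ≥ 1` is written as `n = m + 1` with `m : ℕ`.) -/
theorem borel_sum_eq_one (μ : ℝ) (hμ : μ ∈ Set.Ioo (0:ℝ) 1) :
    ∑' m : ℕ, Real.exp (-(μ * ((m:ℝ) + 1))) * (μ * ((m:ℝ) + 1)) ^ m /
      ((m + 1).factorial : ℝ) = 1 := by
  obtain ⟨h0, h1⟩ := hμ
  have hmem : ((μ:ℝ):ℂ) ∈ UB := real_mem_UB h0.le h1
  have h := Sc_eqOn_one hmem
  rw [Sc_ofReal] at h
  have h2 : ((∑' m:ℕ, Real.exp (-(μ*((m:ℝ)+1))) * (μ*((m:ℝ)+1))^m / (((m+1).factorial : ℕ) : ℝ) : ℝ) : ℂ) = ((1:ℝ):ℂ) := h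
  exact Complex.ofReal_inj.mp h2
end

section
/- The mean of the Borel distribution with parameter μ ∈ (0,1) equals 1/(1-μ), i.e., ∑_{n≥1} n · e^{-μn} (μn)^{n-1}/n! = 1/(1-μ). -/
open Finset Real Filter

namespace BorelAux

lemma findiff (N : ℕ) : ∀ d : ℕ, d ≤ N → ∀ x : ℝ,
    ∑ n ∈ range (N+1), (-1:ℝ)^n * (N.choose n) * (x + n)^d
      = if d = N then (-1:ℝ)^N * N.factorial else 0 := by
  induction N with
  | zero =>
    intro d hd x
    interval_cases d
    simp
  | succ N ih =>
    intro d hd x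
    have key : ∀ y : ℝ, ∀ e : ℕ,
        ∑ n ∈ range (N+2), (-1:ℝ)^n * ((N+1).choose n) * (y + n)^e
          = (∑ n ∈ range (N+1), (-1:ℝ)^n * (N.choose n) * (y + n)^e)
            - ∑ n ∈ range (N+1), (-1:ℝ)^n * (N.choose n) * ((y+1) + n)^e := by
      intro y e
      have h1 : ∀ i : ℕ, (-1:ℝ)^(i+1) * ((N+1).choose (i+1)) * (y + ((i:ℕ)+1:ℕ))^e
          = -((-1:ℝ)^i * (N.choose i) * ((y+1) + i)^e)
            + (-1:ℝ)^(i+1) * (N.choose (i+1)) * (y + ((i:ℕ)+1:ℕ))^e := by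
        intro i
        have hc : (((N+1).choose (i+1) : ℕ) : ℝ) = (N.choose i : ℝ) + (N.choose (i+1) : ℝ) := by
          rw [Nat.choose_succ_succ]; push_cast; ring
        rw [hc]; push_cast; ring
      rw [Finset.sum_range_succ' (fun n => (-1:ℝ)^n * ((N+1).choose n) * (y + n)^e) (N+1)]
      rw [Finset.sum_congr rfl (fun i _ => h1 i), Finset.sum_add_distrib]
      rw [Finset.sum_neg_distrib]
      have h3 := Finset.sum_range_succ' (fun n => (-1:ℝ)^n * (N.choose n) * (y + n)^e) (N+1)
      have h4 := Finset.sum_range_succ (fun n => (-1:ℝ)^n * (N.choose n) * (y + n)^e) (N+1)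
      have h5 : ((N.choose (N+1) : ℕ) : ℝ) = 0 := by
        rw [Nat.choose_succ_self]; norm_num
      rw [h4, h5] at h3
      simp only [Nat.choose_zero_right, Nat.cast_one, Nat.cast_zero, pow_zero, mul_zero,
        zero_mul, add_zero, one_mul, Nat.cast_ofNat] at h3 ⊢
      linarith [h3]
    rw [key x d]
    by_cases hdN : d = N + 1
    · subst hdN
      rw [if_pos rfl]
      have expand : ∀ n : ℕ, ((x+1) + (n:ℝ))^(N+1)
          = ∑ k ∈ range (N+2), (x+(n:ℝ))^k * (((N+1).choose k : ℕ) : ℝ) := by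
        intro n
        have hb : ((x+1) + (n:ℝ)) = (x + (n:ℝ)) + 1 := by ring
        rw [hb, add_pow]
        exact Finset.sum_congr rfl fun k _ => by rw [one_pow, mul_one]
      have hA1 : (∑ n ∈ range (N+1), (-1:ℝ)^n * (N.choose n) * ((x+1) + n)^(N+1))
          = ∑ k ∈ range (N+2), (((N+1).choose k : ℕ) : ℝ)
              * ∑ n ∈ range (N+1), (-1:ℝ)^n * (N.choose n) * (x + n)^k := by
        rw [Finset.sum_congr rfl fun n _ => by
          rw [expand n, Finset.mul_sum]]
        rw [Finset.sum_comm]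
        exact Finset.sum_congr rfl fun k _ => by
          rw [Finset.mul_sum]; exact Finset.sum_congr rfl fun n _ => by ring
      rw [hA1, Finset.sum_range_succ (fun k => (((N+1).choose k : ℕ) : ℝ)
        * ∑ n ∈ range (N+1), (-1:ℝ)^n * (N.choose n) * (x + n)^k) (N+1)]
      have hsm : ∀ k ∈ range (N+1), (((N+1).choose k : ℕ) : ℝ)
            * ∑ n ∈ range (N+1), (-1:ℝ)^n * (N.choose n) * (x + n)^k
          = if k = N then (((N+1).choose N : ℕ) : ℝ) * ((-1:ℝ)^N * N.factorial) else 0 := by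
        intro k hk
        rw [ih k (Nat.lt_succ_iff.mp (Finset.mem_range.mp hk)) x]
        by_cases hkN : k = N
        · subst hkN; rw [if_pos rfl, if_pos rfl]
        · rw [if_neg hkN, if_neg hkN, mul_zero]
      rw [Finset.sum_congr rfl hsm, Finset.sum_ite_eq' (range (N+1)) N
        (fun _ => (((N+1).choose N : ℕ) : ℝ) * ((-1:ℝ)^N * N.factorial)),
        if_pos (Finset.mem_range.mpr (Nat.lt_succ_self N))]
      have hch : (((N+1).choose N : ℕ) : ℝ) = (N:ℝ) + 1 := by
        rw [Nat.choose_succ_self_right]; push_cast; ring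
      have hfa : ((N+1).factorial : ℝ) = ((N:ℝ)+1) * N.factorial := by
        rw [Nat.factorial_succ]; push_cast; ring
      rw [hch, hfa, Nat.choose_self]
      push_cast
      ring
    · have hdle : d ≤ N := Nat.lt_succ_iff.mp (lt_of_le_of_ne hd hdN)
      rw [ih d hdle x, ih d hdle (x+1), if_neg hdN, sub_self]


lemma key_sum (N : ℕ) :
    ∑ n ∈ range (N+1), (-1:ℝ)^(N-n) * (N.choose n) * (n:ℝ)^N = N.factorial := by
  have h := findiff N N le_rfl 0
  rw [if_pos rfl] at h
  simp only [zero_add] at h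
  have hterm : ∀ n ∈ range (N+1), (-1:ℝ)^(N-n) * (N.choose n) * (n:ℝ)^N
      = (-1:ℝ)^N * ((-1:ℝ)^n * (N.choose n) * (n:ℝ)^N) := by
    intro n hn
    have hn' : n ≤ N := Nat.lt_succ_iff.mp (Finset.mem_range.mp hn)
    have h2 : (-1:ℝ)^(N-n) = (-1:ℝ)^N * (-1:ℝ)^n := by
      rw [← pow_add]
      have hNn : N + n = (N - n) + 2*n := by omega
      rw [hNn, pow_add, pow_mul]
      norm_num
    rw [h2]; ring
  rw [Finset.sum_congr rfl hterm, ← Finset.mul_sum, h, ← mul_assoc, ← pow_add, ← two_mul,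
    pow_mul]
  norm_num

noncomputable def c (n : ℕ) : ℝ := (n:ℝ)^n / n.factorial

lemma c_nonneg (n : ℕ) : 0 ≤ c n := by
  unfold c; positivity

lemma c_le (n : ℕ) : c n ≤ Real.exp 1 ^ n := by
  calc c n ≤ Real.exp n := Real.pow_div_factorial_le_exp (x := (n:ℝ)) (Nat.cast_nonneg n) n
  _ = Real.exp 1 ^ n := by rw [← Real.exp_nat_mul]; norm_num

lemma term_le {x : ℝ} (hx : 0 ≤ x) (n : ℕ) : c n * x ^ n ≤ (Real.exp 1 * x)^n := by
  rw [mul_pow]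
  exact mul_le_mul_of_nonneg_right (c_le n) (pow_nonneg hx n)

lemma summable_c {x : ℝ} (hx : 0 ≤ x) (h : Real.exp 1 * x < 1) :
    Summable fun n => c n * x^n :=
  Summable.of_nonneg_of_le (fun n => mul_nonneg (c_nonneg n) (pow_nonneg hx n)) (term_le hx)
    (summable_geometric_of_lt_one (by positivity) h)

noncomputable def p : FormalMultilinearSeries ℝ ℝ ℝ := FormalMultilinearSeries.ofScalars ℝ c

lemma radius_ge : ((Real.exp 1)⁻¹.toNNReal : ENNReal) ≤ p.radius := by
  apply p.le_radius_of_bound 1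
  intro n
  have hnorm : ‖p n‖ = c n := by
    rw [p, FormalMultilinearSeries.ofScalars_norm, Real.norm_eq_abs, abs_of_nonneg (c_nonneg n)]
  rw [hnorm, Real.coe_toNNReal _ (by positivity)]
  calc c n * ((Real.exp 1)⁻¹)^n ≤ Real.exp 1 ^ n * ((Real.exp 1)⁻¹)^n :=
        mul_le_mul_of_nonneg_right (c_le n) (by positivity)
  _ = 1 := by rw [← mul_pow, mul_inv_cancel₀ (by positivity), one_pow]

lemma analyticU {x : ℝ} (hx : |x| < (Real.exp 1)⁻¹) :
    AnalyticAt ℝ (FormalMultilinearSeries.ofScalarsSum c) x := by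
  have hrad : (0 : ENNReal) < p.radius := by
    refine lt_of_lt_of_le ?_ radius_ge
    simp only [ENNReal.coe_pos, ← NNReal.coe_lt_coe]
    rw [Real.coe_toNNReal _ (by positivity)]
    positivity
  have hball := p.hasFPowerSeriesOnBall hrad
  have hmem : x ∈ Metric.eball (0:ℝ) p.radius := by
    rw [Metric.mem_eball, edist_dist, Real.dist_eq, sub_zero]
    refine lt_of_lt_of_le ?_ radius_ge
    rw [ENNReal.ofReal_lt_iff_lt_toReal (abs_nonneg x) (by simp), ENNReal.coe_toReal,
      Real.coe_toNNReal _ (by positivity)]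
    exact hx
  exact hball.analyticAt_of_mem (by simpa using hmem)

lemma map_nonneg' {μ : ℝ} (h0 : 0 ≤ μ) : 0 ≤ μ * Real.exp (-μ) := by positivity

lemma map_lt {μ : ℝ} (h1 : μ < 1) (h0 : 0 < μ) : Real.exp 1 * (μ * Real.exp (-μ)) < 1 := by
  have h := Real.add_one_lt_exp (x := μ - 1) (by intro h; rw [sub_eq_zero] at h; linarith)
  rw [Real.exp_sub] at h
  have hμlt : μ < Real.exp μ / Real.exp 1 := by linarith
  have hepos := Real.exp_pos μ
  have h1pos := Real.exp_pos 1
  rw [Real.exp_neg]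
  rw [lt_div_iff₀ h1pos] at hμlt
  calc Real.exp 1 * (μ * (Real.exp μ)⁻¹) = (μ * Real.exp 1) * (Real.exp μ)⁻¹ := by ring
  _ < Real.exp μ * (Real.exp μ)⁻¹ := by
      apply mul_lt_mul_of_pos_right hμlt (by positivity)
  _ = 1 := mul_inv_cancel₀ (ne_of_gt hepos)

lemma map_abs_lt {μ : ℝ} (h0 : 0 < μ) (h1 : μ < 1) :
    |μ * Real.exp (-μ)| < (Real.exp 1)⁻¹ := by
  rw [abs_of_nonneg (map_nonneg' h0.le)]
  have := map_lt h1 h0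
  rw [← lt_div_iff₀' (Real.exp_pos 1)] at this
  simpa [one_div] using this

noncomputable def F (μ : ℝ) (q : ℕ × ℕ) : ℝ :=
  c q.1 * μ ^ q.1 * ((-((q.1:ℝ) * μ)) ^ q.2 / q.2.factorial)

lemma hrow (μ : ℝ) (n : ℕ) :
    HasSum (fun j => F μ (n, j)) (c n * μ^n * Real.exp (-((n:ℝ)*μ))) := by
  have h := NormedSpace.expSeries_div_hasSum_exp (x := -((n:ℝ)*μ))
  rw [← Real.exp_eq_exp_ℝ] at h
  exact h.mul_left _

lemma F_abs (μ : ℝ) (hμ : 0 ≤ μ) (q : ℕ × ℕ) :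
    |F μ q| = c q.1 * μ ^ q.1 * (((q.1:ℝ) * μ) ^ q.2 / q.2.factorial) := by
  have h1 : |(-((q.1:ℝ) * μ)) ^ q.2| = ((q.1:ℝ) * μ) ^ q.2 := by
    rw [abs_pow, abs_neg, abs_of_nonneg (by positivity)]
  rw [F, abs_mul, abs_mul, abs_div, h1, abs_of_nonneg (by unfold c; positivity),
    abs_of_nonneg (by positivity), abs_of_nonneg (Nat.cast_nonneg _)]

lemma hrow_abs (μ : ℝ) (hμ : 0 ≤ μ) (n : ℕ) :
    HasSum (fun j => |F μ (n, j)|) (c n * μ^n * Real.exp ((n:ℝ)*μ)) := by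
  have h := NormedSpace.expSeries_div_hasSum_exp (x := ((n:ℝ)*μ))
  rw [← Real.exp_eq_exp_ℝ] at h
  have h2 := h.mul_left (c n * μ^n)
  have hf : (fun j => |F μ (n, j)|) = fun i => c n * μ ^ n * (((n:ℝ) * μ) ^ i / (i.factorial:ℝ)) :=
    funext fun j => F_abs μ hμ (n, j)
  rw [hf]; exact h2

lemma ratio_lt {μ : ℝ} (h0 : 0 < μ) (h8 : μ < 1/8) : Real.exp 1 * (μ * Real.exp μ) < 1 := by
  have he : Real.exp μ < Real.exp 1 := Real.exp_lt_exp.mpr (by linarith)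
  have hd9 : Real.exp 1 < 2.7182818286 := Real.exp_one_lt_d9
  have hpos := Real.exp_pos μ
  have h1pos := Real.exp_pos 1
  have hA : μ * Real.exp μ < (1/8) * 2.7182818286 := by nlinarith
  have hB : Real.exp 1 * (μ * Real.exp μ) < 2.7182818286 * ((1/8) * 2.7182818286) := by
    nlinarith [mul_pos h0 hpos]
  linarith [hB]

lemma summable_F_abs {μ : ℝ} (h0 : 0 < μ) (h8 : μ < 1/8) :
    Summable fun q => |F μ q| := by
  rw [summable_prod_of_nonneg (fun q => abs_nonneg _)]
  refine ⟨fun n => (hrow_abs μ h0.le n).summable, ?_⟩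
  apply Summable.of_nonneg_of_le (fun n => ?_) (fun n => ?_)
    (summable_geometric_of_lt_one (r := Real.exp 1 * (μ * Real.exp μ)) (by positivity)
      (ratio_lt h0 h8))
  · rw [(hrow_abs μ h0.le n).tsum_eq]; unfold c; positivity
  · rw [(hrow_abs μ h0.le n).tsum_eq]
    have hswap : μ^n * Real.exp ((n:ℝ)*μ) = (μ * Real.exp μ)^n := by
      rw [mul_pow, ← Real.exp_nat_mul]
    calc c n * μ^n * Real.exp ((n:ℝ)*μ) = c n * (μ * Real.exp μ)^n := by
          rw [mul_assoc, hswap]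
    _ ≤ Real.exp 1 ^ n * (μ * Real.exp μ)^n :=
          mul_le_mul_of_nonneg_right (c_le n) (by positivity)
    _ = (Real.exp 1 * (μ * Real.exp μ))^n := (mul_pow _ _ _).symm

lemma antidiag_sum {μ : ℝ} (N : ℕ) : ∑ q ∈ antidiagonal N, F μ q = μ^N := by
  rw [Finset.Nat.sum_antidiagonal_eq_sum_range_succ_mk]
  have hterm : ∀ k ∈ range (N+1), F μ (k, N-k)
      = μ^N / N.factorial * ((-1:ℝ)^(N-k) * (N.choose k) * (k:ℝ)^N) := by
    intro k hk
    have hkN : k ≤ N := Nat.lt_succ_iff.mp (Finset.mem_range.mp hk)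
    have h1 : ((k:ℝ))^k * ((k:ℝ))^(N-k) = (k:ℝ)^N := by
      rw [← pow_add, Nat.add_sub_cancel' hkN]
    have h2 : μ^k * μ^(N-k) = μ^N := by rw [← pow_add, Nat.add_sub_cancel' hkN]
    have h3 : ((N.choose k : ℕ):ℝ) = (N.factorial:ℝ)/((k.factorial:ℝ)*(((N-k).factorial):ℝ)) :=
      Nat.cast_choose ℝ hkN
    rw [← h1, ← h2, h3]
    simp only [F, c]
    rw [neg_pow, mul_pow]
    have hk0 : (k.factorial:ℝ) ≠ 0 := by positivity
    have hNk0 : (((N-k).factorial:ℕ):ℝ) ≠ 0 := by positivity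
    have hN0 : ((N.factorial:ℕ):ℝ) ≠ 0 := by positivity
    field_simp
  rw [Finset.sum_congr rfl hterm, ← Finset.mul_sum, key_sum N]
  field_simp

lemma small_eq {μ : ℝ} (h0 : 0 < μ) (h8 : μ < 1/8) :
    FormalMultilinearSeries.ofScalarsSum c (μ * Real.exp (-μ)) = (1-μ)⁻¹ := by
  have hFs : Summable (F μ) := summable_abs_iff.mp (summable_F_abs h0 h8)
  have ha : ∑' q : ℕ × ℕ, F μ q
      = FormalMultilinearSeries.ofScalarsSum c (μ * Real.exp (-μ)) := by
    rw [Summable.tsum_prod' hFs (fun n => (hrow μ n).summable),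
      FormalMultilinearSeries.ofScalars_sum_eq]
    refine tsum_congr fun n => ?_
    rw [(hrow μ n).tsum_eq, smul_eq_mul, mul_pow, ← Real.exp_nat_mul]
    have hnn : (n:ℝ) * (-μ) = -((n:ℝ)*μ) := by ring
    rw [hnn, mul_assoc]
  have hb : ∑' q : ℕ × ℕ, F μ q = (1-μ)⁻¹ := by
    have hsum2 : Summable (fun x : (Σ n : ℕ, (antidiagonal n : Finset (ℕ×ℕ))) =>
        F μ (Finset.HasAntidiagonal.sigmaAntidiagonalEquivProd x)) :=
      Finset.HasAntidiagonal.sigmaAntidiagonalEquivProd.summable_iff.mpr hFs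
    have hstep1 : ∑' q : ℕ × ℕ, F μ q
        = ∑' x : (Σ n : ℕ, (antidiagonal n : Finset (ℕ×ℕ))),
            F μ (Finset.HasAntidiagonal.sigmaAntidiagonalEquivProd x) :=
      (Finset.HasAntidiagonal.sigmaAntidiagonalEquivProd.tsum_eq (F μ)).symm
    have hstep2 : ∑' x : (Σ n : ℕ, (antidiagonal n : Finset (ℕ×ℕ))),
          F μ (Finset.HasAntidiagonal.sigmaAntidiagonalEquivProd x)
        = ∑' (N : ℕ) (q : (antidiagonal N : Finset (ℕ×ℕ))),
            F μ (Finset.HasAntidiagonal.sigmaAntidiagonalEquivProd ⟨N, q⟩) :=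
      Summable.tsum_sigma' (fun N => (hasSum_fintype _).summable) hsum2
    rw [hstep1, hstep2]
    have hN : ∀ N : ℕ, ∑' (q : (antidiagonal N : Finset (ℕ×ℕ))),
        F μ (Finset.HasAntidiagonal.sigmaAntidiagonalEquivProd ⟨N, q⟩) = μ^N := by
      intro N
      simp only [Finset.HasAntidiagonal.sigmaAntidiagonalEquivProd_apply]
      rw [tsum_fintype, Finset.sum_coe_sort (antidiagonal N) (F μ), antidiag_sum N]
    rw [tsum_congr hN]
    exact tsum_geometric_of_lt_one h0.le (by linarith)
  rw [← ha, hb]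

end BorelAux

namespace BorelAux

lemma analyticG : AnalyticOnNhd ℝ
    (fun t : ℝ => FormalMultilinearSeries.ofScalarsSum c (t * Real.exp (-t)))
    (Set.Ioo (0:ℝ) 1) := by
  intro μ hμ
  have hinner : AnalyticAt ℝ (fun t : ℝ => t * Real.exp (-t)) μ :=
    analyticAt_id.mul (analyticAt_id.neg.rexp)
  have h := AnalyticAt.comp (g := FormalMultilinearSeries.ofScalarsSum c)
    (f := fun t : ℝ => t * Real.exp (-t)) (x := μ)
    (analyticU (map_abs_lt hμ.1 hμ.2)) hinner
  exact h

lemma analyticR : AnalyticOnNhd ℝ (fun t : ℝ => (1-t)⁻¹) (Set.Ioo (0:ℝ) 1) := by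
  intro μ hμ
  refine AnalyticAt.inv ?_ ?_
  · exact analyticAt_const.sub analyticAt_id
  · show (1:ℝ) - μ ≠ 0
    intro h; rw [sub_eq_zero] at h
    have := hμ.2; linarith

lemma global_eq {μ : ℝ} (hμ : μ ∈ Set.Ioo (0:ℝ) 1) :
    FormalMultilinearSeries.ofScalarsSum c (μ * Real.exp (-μ)) = (1-μ)⁻¹ := by
  have hev : (fun t : ℝ => FormalMultilinearSeries.ofScalarsSum c (t * Real.exp (-t)))
      =ᶠ[nhds (1/16 : ℝ)] (fun t : ℝ => (1-t)⁻¹) := by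
    filter_upwards [Ioo_mem_nhds (by norm_num : (0:ℝ) < 1/16) (by norm_num : (1/16:ℝ) < 1/8)]
      with t ht using small_eq ht.1 ht.2
  exact analyticG.eqOn_of_preconnected_of_eventuallyEq analyticR isPreconnected_Ioo
    (by norm_num : (1/16 : ℝ) ∈ Set.Ioo (0:ℝ) 1) hev hμ

end BorelAux

/-- The mean of the Borel distribution with parameter `μ ∈ (0,1)` equals `1/(1-μ)`:
`∑_{n ≥ 1} n · e^{-μn} (μn)^{n-1}/n! = 1/(1-μ)`
(the index `n ≥ 1` is written as `n = m + 1` with `m : ℕ`). -/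
theorem borel_mean (μ : ℝ) (hμ : μ ∈ Set.Ioo (0:ℝ) 1) :
    ∑' m : ℕ, ((m:ℝ) + 1) *
      (Real.exp (-(μ * ((m:ℝ) + 1))) * (μ * ((m:ℝ) + 1)) ^ m /
        ((m + 1).factorial : ℝ)) = 1 / (1 - μ) := by
  obtain ⟨h0, h1⟩ := hμ
  have hμne : μ ≠ 0 := ne_of_gt h0
  have h1ne : (1:ℝ) - μ ≠ 0 := by intro h; rw [sub_eq_zero] at h; linarith
  set x := μ * Real.exp (-μ) with hx
  have hsum : Summable (fun n => BorelAux.c n * x^n) :=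
    BorelAux.summable_c (BorelAux.map_nonneg' h0.le) (BorelAux.map_lt h1 h0)
  have hU : FormalMultilinearSeries.ofScalarsSum BorelAux.c x = (1-μ)⁻¹ :=
    BorelAux.global_eq ⟨h0, h1⟩
  have htsum : ∑' n : ℕ, BorelAux.c n * x^n = (1-μ)⁻¹ := by
    have h := FormalMultilinearSeries.ofScalars_sum_eq (E := ℝ) BorelAux.c x
    simp only [smul_eq_mul] at h
    rw [← h, hU]
  rw [Summable.tsum_eq_zero_add hsum] at htsum
  have hc0 : BorelAux.c 0 * x^0 = 1 := by simp [BorelAux.c]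
  rw [hc0] at htsum
  have htail : ∑' m : ℕ, BorelAux.c (m+1) * x^(m+1) = (1-μ)⁻¹ - 1 := by linarith
  have hterm : ∀ m : ℕ, ((m:ℝ) + 1) *
      (Real.exp (-(μ * ((m:ℝ) + 1))) * (μ * ((m:ℝ) + 1)) ^ m / ((m + 1).factorial : ℝ))
      = μ⁻¹ * (BorelAux.c (m+1) * x^(m+1)) := by
    intro m
    have hxpow : x^(m+1) = μ^(m+1) * Real.exp (-(μ * ((m:ℝ)+1))) := by
      rw [hx, mul_pow, ← Real.exp_nat_mul,
        show ((m+1:ℕ):ℝ) * (-μ) = -(μ*((m:ℝ)+1)) by push_cast; ring]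
    rw [hxpow]
    simp only [BorelAux.c]
    rw [mul_pow]
    have hfac : ((m+1).factorial : ℝ) ≠ 0 := by positivity
    push_cast
    field_simp
    ring
  calc ∑' m : ℕ, ((m:ℝ) + 1) *
      (Real.exp (-(μ * ((m:ℝ) + 1))) * (μ * ((m:ℝ) + 1)) ^ m / ((m + 1).factorial : ℝ))
      = ∑' m : ℕ, μ⁻¹ * (BorelAux.c (m+1) * x^(m+1)) := tsum_congr hterm
  _ = μ⁻¹ * ∑' m : ℕ, BorelAux.c (m+1) * x^(m+1) := tsum_mul_left
  _ = μ⁻¹ * ((1-μ)⁻¹ - 1) := by rw [htail]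
  _ = 1 / (1 - μ) := by field_simp; ring
end

section
/- Let Γ be the operator (Γf)(z) = a ∫_0^∞ f(z+y) e^{-by} dy with 0 < a < b. Then for f(x) = x^p e^{ηx} 1_{[0,t]}(x) with η < b, and z ∈ [0,t], the Neumann series satisfies ((I - Γ)^{-1} Γ f)(z) = ∑_{n≥1} (Γ^n f)(z) = a e^{ηz} ∫_0^{t-z} (z+y)^p e^{(η + a - b) y} dy. -/
open MeasureTheory

noncomputable def GammaOp (a b : ℝ) (f : ℝ → ℝ) (z : ℝ) : ℝ :=
  a * ∫ y in Set.Ioi (0:ℝ), f (z + y) * Real.exp (-(b * y))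

namespace NeumannAux

noncomputable def nf (η t : ℝ) (p : ℕ) : ℝ → ℝ :=
  Set.indicator (Set.Icc (0:ℝ) t) (fun x => x ^ p * Real.exp (η * x))

lemma nf_meas (η t : ℝ) (p : ℕ) : Measurable (nf η t p) :=
  Measurable.indicator (by fun_prop) measurableSet_Icc

lemma nf_nonneg (η t : ℝ) (p : ℕ) (x : ℝ) : 0 ≤ nf η t p x := by
  unfold nf
  by_cases h : x ∈ Set.Icc (0:ℝ) t
  · rw [Set.indicator_of_mem h]
    have := h.1
    positivity
  · rw [Set.indicator_of_notMem h]

lemma nf_le (η t : ℝ) (p : ℕ) (ht : 0 ≤ t) (x : ℝ) :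
    nf η t p x ≤ t ^ p * Real.exp (|η| * t) := by
  unfold nf
  by_cases h : x ∈ Set.Icc (0:ℝ) t
  · rw [Set.indicator_of_mem h]
    have h1 : x ^ p ≤ t ^ p := pow_le_pow_left₀ h.1 h.2 p
    have h2 : Real.exp (η * x) ≤ Real.exp (|η| * t) := by
      apply Real.exp_le_exp.2
      calc η * x ≤ |η| * x := mul_le_mul_of_nonneg_right (le_abs_self η) h.1
        _ ≤ |η| * t := mul_le_mul_of_nonneg_left h.2 (abs_nonneg η)
    exact mul_le_mul h1 h2 (Real.exp_pos _).le (by positivity)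
  · rw [Set.indicator_of_notMem h]
    positivity

lemma nf_eq_zero (η t : ℝ) (p : ℕ) {x : ℝ} (h : x ∉ Set.Icc (0:ℝ) t) : nf η t p x = 0 :=
  Set.indicator_of_notMem h _

lemma shift_integral (g : ℝ → ℝ) (c : ℝ) :
    (∫ u in Set.Ioi (0:ℝ), g (c + u)) = ∫ v in Set.Ioi c, g v := by
  rw [← integral_indicator measurableSet_Ioi, ← integral_indicator measurableSet_Ioi,
      ← integral_add_left_eq_self (Set.indicator (Set.Ioi c) g) c]
  congr 1
  funext u
  by_cases h : 0 < u
  · rw [Set.indicator_of_mem (Set.mem_Ioi.2 h), Set.indicator_of_mem (by simp [h])]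
  · rw [Set.indicator_of_notMem (by simpa using h), Set.indicator_of_notMem (by simp [h])]

lemma iterate_formula (a b η t : ℝ) (p : ℕ) (ha : 0 < a) (hb : 0 < b) (ht : 0 ≤ t) :
    ∀ (m : ℕ) (z : ℝ),
      (GammaOp a b)^[m+1] (nf η t p) z
        = a ^ (m+1) / (m.factorial : ℝ) *
            ∫ u in Set.Ioi (0:ℝ), nf η t p (z + u) * Real.exp (-(b * u)) * u ^ m := by
  intro m
  induction m with
  | zero =>
      intro z
      simp only [zero_add, Function.iterate_one, pow_one, Nat.factorial_zero, Nat.cast_one,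
        div_one, pow_zero, mul_one, GammaOp]
  | succ m ih =>
      intro z
      set C : ℝ := t ^ p * Real.exp (|η| * t) with hC
      set M : ℝ := max (t - z) 0 with hM
      set c : ℝ := a ^ (m+1) / (m.factorial : ℝ) with hc
      set φ : ℝ → ℝ := fun v => nf η t p (z + v) * Real.exp (-(b * v)) with hφ
      set K : ℝ × ℝ → ℝ :=
        Set.indicator {q : ℝ × ℝ | 0 < q.1 ∧ q.1 < q.2}
          (fun q => φ q.2 * (q.2 - q.1) ^ m) with hK
      have hφmeas : Measurable φ := by
        apply Measurable.mul
        · exact (nf_meas η t p).comp (measurable_const.add measurable_id)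
        · fun_prop
      have hsetmeas : MeasurableSet {q : ℝ × ℝ | 0 < q.1 ∧ q.1 < q.2} := by
        exact (measurableSet_lt measurable_const measurable_fst).inter
          (measurableSet_lt measurable_fst measurable_snd)
      have hKmeas : Measurable K :=
        Measurable.indicator
          ((hφmeas.comp measurable_snd).mul ((measurable_snd.sub measurable_fst).pow_const m))
          hsetmeas
      -- integrability of K
      have hmemiff : ∀ y v : ℝ, ((y, v) ∈ {q : ℝ × ℝ | 0 < q.1 ∧ q.1 < q.2}) ↔ (0 < y ∧ y < v) :=
        fun y v => Iff.rfl
      have hC0 : 0 ≤ C := by rw [hC]; positivity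
      have hM0 : 0 ≤ M := le_max_right _ _
      have hφ0 : ∀ v, 0 ≤ φ v := fun v =>
        mul_nonneg (nf_nonneg η t p _) (Real.exp_pos _).le
      have hKint : Integrable K (volume : Measure (ℝ × ℝ)) := by
        refine Integrable.mono'
          (g := (Set.Ioo (0:ℝ) M ×ˢ Set.Ioc (0:ℝ) M).indicator (fun _ => C * M ^ m))
          ?_ hKmeas.aestronglyMeasurable ?_
        · rw [integrable_indicator_iff (measurableSet_Ioo.prod measurableSet_Ioc)]
          refine integrableOn_const (LT.lt.ne ?_)
          refine lt_of_le_of_lt (measure_mono (Set.prod_mono Set.Ioo_subset_Icc_self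
            Set.Ioc_subset_Icc_self)) ?_
          exact (isCompact_Icc.prod isCompact_Icc).measure_lt_top
        · refine Filter.Eventually.of_forall fun q => ?_
          obtain ⟨y, v⟩ := q
          by_cases hcond : (y, v) ∈ {q : ℝ × ℝ | 0 < q.1 ∧ q.1 < q.2}
          · obtain ⟨hy, hv⟩ := (hmemiff y v).1 hcond
            by_cases hmem : z + v ∈ Set.Icc (0:ℝ) t
            · have hvM : v ≤ M := le_trans (by linarith [hmem.2]) (le_max_left _ _)
              have hqS : (y, v) ∈ Set.Ioo (0:ℝ) M ×ˢ Set.Ioc (0:ℝ) M :=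
                ⟨⟨hy, lt_of_lt_of_le hv hvM⟩, ⟨lt_trans hy hv, hvM⟩⟩
              rw [Set.indicator_of_mem hqS]
              have hK0 : 0 ≤ K (y, v) := by
                rw [hK, Set.indicator_of_mem ((hmemiff _ _).2 ⟨hy, hv⟩)]
                exact mul_nonneg (hφ0 v) (pow_nonneg (by linarith) m)
              rw [Real.norm_eq_abs, abs_of_nonneg hK0, hK, Set.indicator_of_mem ((hmemiff _ _).2 ⟨hy, hv⟩)]
              have h1 : φ v ≤ C := by
                have he : Real.exp (-(b * v)) ≤ 1 := by
                  rw [Real.exp_le_one_iff]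
                  have : 0 < v := lt_trans hy hv
                  nlinarith
                calc φ v ≤ nf η t p (z + v) * 1 :=
                      mul_le_mul_of_nonneg_left he (nf_nonneg η t p _)
                  _ = nf η t p (z + v) := mul_one _
                  _ ≤ C := nf_le η t p ht _
              have h2 : (v - y) ^ m ≤ M ^ m :=
                pow_le_pow_left₀ (by linarith) (by linarith) m
              exact mul_le_mul h1 h2 (pow_nonneg (by linarith) m) hC0
            · have : φ v = 0 := by
                rw [hφ]; simp only [nf_eq_zero η t p hmem, zero_mul]
              rw [hK, Set.indicator_of_mem ((hmemiff _ _).2 ⟨hy, hv⟩), this, zero_mul, norm_zero]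
              exact Set.indicator_nonneg (fun _ _ => by positivity) _
          · rw [hK, Set.indicator_of_notMem hcond, norm_zero]
            exact Set.indicator_nonneg (fun _ _ => by positivity) _
      -- pointwise value of inner v-integral
      have claimA : ∀ y : ℝ, (∫ v, K (y, v)) =
          Set.indicator (Set.Ioi (0:ℝ)) (fun y => ∫ v in Set.Ioi y, φ v * (v - y) ^ m) y := by
        intro y
        by_cases hy : 0 < y
        · rw [Set.indicator_of_mem (Set.mem_Ioi.2 hy), ← integral_indicator measurableSet_Ioi]
          congr 1
          funext v
          by_cases hv : y < v
          · rw [hK, Set.indicator_of_mem ((hmemiff _ _).2 ⟨hy, hv⟩), Set.indicator_of_mem (Set.mem_Ioi.2 hv)]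
          · rw [hK, Set.indicator_of_notMem (fun hh => hv ((hmemiff _ _).1 hh).2),
                Set.indicator_of_notMem (by simpa using hv)]
        · rw [Set.indicator_of_notMem (by simpa using hy)]
          have h0 : ∀ v, K (y, v) = 0 := fun v => by
            rw [hK, Set.indicator_of_notMem (fun hh => hy ((hmemiff _ _).1 hh).1)]
          simp only [h0, integral_zero]
      have claimC : ∀ v : ℝ, (∫ y, K (y, v)) =
          Set.indicator (Set.Ioi (0:ℝ)) (fun v => φ v * (v ^ (m+1) / (m+1))) v := by
        intro v
        by_cases hv : 0 < v
        · rw [Set.indicator_of_mem (Set.mem_Ioi.2 hv)]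
          have hfun : (fun y => K (y, v))
              = Set.indicator (Set.Ioo (0:ℝ) v) (fun y => φ v * (v - y) ^ m) := by
            funext y
            by_cases h : 0 < y ∧ y < v
            · rw [hK, Set.indicator_of_mem ((hmemiff _ _).2 h), Set.indicator_of_mem (Set.mem_Ioo.2 h)]
            · rw [hK, Set.indicator_of_notMem (fun hh => h ((hmemiff _ _).1 hh)),
                  Set.indicator_of_notMem (by simpa [Set.mem_Ioo] using h)]
          rw [hfun, integral_indicator measurableSet_Ioo, integral_const_mul]
          congr 1
          rw [← integral_Ioc_eq_integral_Ioo, ← intervalIntegral.integral_of_le hv.le,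
              intervalIntegral.integral_comp_sub_left (fun u => u ^ m) v]
          simp [integral_pow]
        · rw [Set.indicator_of_notMem (by simpa using hv)]
          have h0 : ∀ y, K (y, v) = 0 := fun y => by
            rw [hK, Set.indicator_of_notMem]
            intro hh
            obtain ⟨h1, h2⟩ := (hmemiff _ _).1 hh
            exact hv (lt_trans h1 h2)
          simp only [h0, integral_zero]
      calc (GammaOp a b)^[m+1+1] (nf η t p) z
          = a * ∫ y in Set.Ioi (0:ℝ),
              ((GammaOp a b)^[m+1] (nf η t p)) (z + y) * Real.exp (-(b * y)) := by
            rw [Function.iterate_succ_apply']; rfl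
        _ = a * ∫ y in Set.Ioi (0:ℝ), c * ∫ v in Set.Ioi y, φ v * (v - y) ^ m := by
            congr 1
            refine setIntegral_congr_fun measurableSet_Ioi fun y _ => ?_
            rw [ih (z + y),
                ← shift_integral (fun v => φ v * (v - y) ^ m) y]
            have : ∀ u : ℝ, φ (y + u) * (y + u - y) ^ m
                = Real.exp (-(b * y)) * (nf η t p (z + y + u) * Real.exp (-(b * u)) * u ^ m) := by
              intro u
              simp only [hφ, add_sub_cancel_left]
              rw [show -(b * (y + u)) = -(b * y) + -(b * u) by ring, Real.exp_add, ← add_assoc]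
              ring
            simp only [this, integral_const_mul]
            ring
        _ = a * c * ∫ y in Set.Ioi (0:ℝ), ∫ v in Set.Ioi y, φ v * (v - y) ^ m := by
            rw [integral_const_mul]; ring
        _ = a * c * ∫ y, ∫ v, K (y, v) := by
            rw [← integral_indicator measurableSet_Ioi]
            congr 1
            exact (congrArg _ (funext claimA)).symm
        _ = a * c * ∫ v, ∫ y, K (y, v) := by
            congr 1
            exact integral_integral_swap hKint
        _ = a * c * ∫ v in Set.Ioi (0:ℝ), φ v * (v ^ (m+1) / (m+1)) := by
            rw [← integral_indicator measurableSet_Ioi]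
            congr 1
            exact congrArg _ (funext claimC)
        _ = a ^ (m+1+1) / ((m+1).factorial : ℝ) *
            ∫ u in Set.Ioi (0:ℝ), nf η t p (z + u) * Real.exp (-(b * u)) * u ^ (m+1) := by
            have : ∀ v : ℝ, φ v * (v ^ (m+1) / (m+1))
                = (1 / (m+1 : ℝ)) * (nf η t p (z + v) * Real.exp (-(b * v)) * v ^ (m+1)) := by
              intro v; simp only [hφ]; ring
            simp only [this, integral_const_mul, hc, Nat.factorial_succ]
            have hm1 : ((m:ℝ) + 1) ≠ 0 := by positivity
            push_cast
            field_simp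
            ring_nf
            simp only [mul_comm b]
end NeumannAux

/-- For `0 < a < b`, `η < b` and `f(x) = x^p e^{ηx} 1_{[0,t]}(x)`, the Neumann series
of the exponential-kernel operator `Γ` satisfies, for `z ∈ [0,t]`,
`((I-Γ)⁻¹ Γ f)(z) = ∑_{n ≥ 1} (Γⁿ f)(z) = a e^{ηz} ∫_0^{t-z} (z+y)^p e^{(η+a-b)y} dy`. -/
theorem neumann_series_exponential_kernel (a b η t : ℝ) (p : ℕ)
    (ha : 0 < a) (hab : a < b) (hη : η < b) (ht : 0 ≤ t)
    (z : ℝ) (hz : z ∈ Set.Icc (0:ℝ) t) :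
    ∑' m : ℕ,
        (GammaOp a b)^[m + 1]
          (Set.indicator (Set.Icc (0:ℝ) t) (fun x => x ^ p * Real.exp (η * x))) z =
      a * Real.exp (η * z) *
        ∫ y in (0:ℝ)..(t - z), (z + y) ^ p * Real.exp ((η + a - b) * y) := by
  obtain ⟨hz0, hzt⟩ := hz
  have hb : 0 < b := ha.trans hab
  have htz : 0 ≤ t - z := by linarith
  set C : ℝ := t ^ p * Real.exp (|η| * t) with hC
  have hC0 : 0 ≤ C := by rw [hC]; positivity
  set M : ℝ := t - z with hM
  set F : ℕ → ℝ → ℝ := fun m u =>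
    a ^ (m+1) / (m.factorial : ℝ) *
      (NeumannAux.nf η t p (z + u) * Real.exp (-(b * u)) * u ^ m) with hF
  have hrw : ∀ m : ℕ,
      (GammaOp a b)^[m+1]
        (Set.indicator (Set.Icc (0:ℝ) t) (fun x => x ^ p * Real.exp (η * x))) z
        = ∫ u in Set.Ioi (0:ℝ), F m u := by
    intro m
    rw [show Set.indicator (Set.Icc (0:ℝ) t) (fun x => x ^ p * Real.exp (η * x))
          = NeumannAux.nf η t p from rfl,
        NeumannAux.iterate_formula a b η t p ha hb ht m z, ← integral_const_mul]
  have hFmeas : ∀ m : ℕ, Measurable (F m) := by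
    intro m
    apply Measurable.mul measurable_const
    exact (((NeumannAux.nf_meas η t p).comp (measurable_const.add measurable_id)).mul
      (by fun_prop)).mul (by fun_prop)
  have hFbound : ∀ (m : ℕ), ∀ u ∈ Set.Ioi (0:ℝ), ‖F m u‖ ≤
      (Set.Ioc (0:ℝ) M).indicator
        (fun _ => a ^ (m+1) / (m.factorial : ℝ) * (C * M ^ m)) u := by
    intro m u hu
    have hu0 : 0 < u := hu
    have hcm0 : (0:ℝ) ≤ a ^ (m+1) / (m.factorial : ℝ) := by positivity
    by_cases hmem : z + u ∈ Set.Icc (0:ℝ) t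
    · have huM : u ∈ Set.Ioc (0:ℝ) M := ⟨hu0, by rw [hM]; linarith [hmem.2]⟩
      rw [Set.indicator_of_mem huM]
      have hF0 : 0 ≤ F m u := by
        rw [hF]
        have := NeumannAux.nf_nonneg η t p (z + u)
        positivity
      rw [Real.norm_eq_abs, abs_of_nonneg hF0, hF]
      apply mul_le_mul_of_nonneg_left _ hcm0
      have h1 : NeumannAux.nf η t p (z + u) * Real.exp (-(b * u)) ≤ C := by
        have he : Real.exp (-(b * u)) ≤ 1 := by
          rw [Real.exp_le_one_iff]; nlinarith
        calc NeumannAux.nf η t p (z + u) * Real.exp (-(b * u))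
            ≤ NeumannAux.nf η t p (z + u) * 1 :=
              mul_le_mul_of_nonneg_left he (NeumannAux.nf_nonneg η t p _)
          _ = NeumannAux.nf η t p (z + u) := mul_one _
          _ ≤ C := NeumannAux.nf_le η t p ht _
      have h2 : u ^ m ≤ M ^ m := pow_le_pow_left₀ hu0.le huM.2 m
      exact mul_le_mul h1 h2 (pow_nonneg hu0.le m)  hC0
    · rw [hF]
      simp only [NeumannAux.nf_eq_zero η t p hmem, zero_mul, mul_zero, norm_zero]
      exact Set.indicator_nonneg (fun _ _ => by positivity) _
  have hInt : ∀ m : ℕ, Integrable (F m) (volume.restrict (Set.Ioi (0:ℝ))) := by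
    intro m
    refine Integrable.mono'
      (g := (Set.Ioc (0:ℝ) M).indicator
        (fun _ => a ^ (m+1) / (m.factorial : ℝ) * (C * M ^ m))) ?_
      (hFmeas m).aestronglyMeasurable ?_
    · refine Integrable.restrict ?_
      rw [integrable_indicator_iff measurableSet_Ioc]
      exact integrableOn_const (measure_Ioc_lt_top).ne
    · rw [ae_restrict_iff' measurableSet_Ioi]
      exact Filter.Eventually.of_forall (hFbound m)
  have hnormint : ∀ m : ℕ, (∫ u in Set.Ioi (0:ℝ), ‖F m u‖) ≤
      M * (a ^ (m+1) / (m.factorial : ℝ) * (C * M ^ m)) := by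
    intro m
    have hgint : IntegrableOn
        ((Set.Ioc (0:ℝ) M).indicator
          (fun _ => a ^ (m+1) / (m.factorial : ℝ) * (C * M ^ m))) (Set.Ioi (0:ℝ)) := by
      refine Integrable.restrict ?_
      rw [integrable_indicator_iff measurableSet_Ioc]
      exact integrableOn_const (measure_Ioc_lt_top).ne
    calc (∫ u in Set.Ioi (0:ℝ), ‖F m u‖)
        ≤ ∫ u in Set.Ioi (0:ℝ), (Set.Ioc (0:ℝ) M).indicator
            (fun _ => a ^ (m+1) / (m.factorial : ℝ) * (C * M ^ m)) u :=
          setIntegral_mono_on (hInt m).norm hgint measurableSet_Ioi (hFbound m)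
      _ = M * (a ^ (m+1) / (m.factorial : ℝ) * (C * M ^ m)) := by
          rw [setIntegral_indicator measurableSet_Ioc,
            Set.inter_eq_self_of_subset_right Set.Ioc_subset_Ioi_self, setIntegral_const,
            Real.volume_real_Ioc_of_le htz, smul_eq_mul, sub_zero]
  have hSum : Summable fun m : ℕ => ∫ u in Set.Ioi (0:ℝ), ‖F m u‖ := by
    refine Summable.of_nonneg_of_le
      (fun m => integral_nonneg fun u => norm_nonneg _) hnormint ?_
    have h : Summable fun m : ℕ => (M * C * a) * ((a * M) ^ m / (m.factorial : ℝ)) :=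
      (Real.summable_pow_div_factorial (a * M)).mul_left _
    exact h.congr fun m => by rw [mul_pow]; ring
  have hexp : ∀ x : ℝ, (∑' n : ℕ, x ^ n / (n.factorial : ℝ)) = Real.exp x := by
    intro x
    rw [Real.exp_eq_exp_ℝ, NormedSpace.exp_eq_tsum_div]
  have htsum : ∀ u : ℝ, (∑' m : ℕ, F m u) =
      a * (NeumannAux.nf η t p (z + u) * Real.exp (-(b * u))) * Real.exp (a * u) := by
    intro u
    have h1 : ∀ m : ℕ, F m u =
        (a * (NeumannAux.nf η t p (z + u) * Real.exp (-(b * u)))) *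
          ((a * u) ^ m / (m.factorial : ℝ)) := by
      intro m
      rw [hF, mul_pow]
      ring
    rw [tsum_congr h1, tsum_mul_left, hexp (a * u)]
  calc ∑' m : ℕ,
        (GammaOp a b)^[m + 1]
          (Set.indicator (Set.Icc (0:ℝ) t) (fun x => x ^ p * Real.exp (η * x))) z
      = ∑' m : ℕ, ∫ u in Set.Ioi (0:ℝ), F m u := tsum_congr hrw
    _ = ∫ u in Set.Ioi (0:ℝ), ∑' m : ℕ, F m u :=
        integral_tsum_of_summable_integral_norm hInt hSum
    _ = ∫ u in Set.Ioi (0:ℝ), (Set.Icc (-z) (t - z)).indicator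
          (fun u => a * ((z + u) ^ p * Real.exp (η * (z + u)) * Real.exp ((a - b) * u))) u := by
        refine setIntegral_congr_fun measurableSet_Ioi fun u _ => ?_
        rw [htsum u]
        by_cases hmem : z + u ∈ Set.Icc (0:ℝ) t
        · have hm2 : u ∈ Set.Icc (-z) (t - z) :=
            ⟨by linarith [hmem.1], by linarith [hmem.2]⟩
          rw [Set.indicator_of_mem hm2,
            show NeumannAux.nf η t p (z + u)
              = (z + u) ^ p * Real.exp (η * (z + u)) from Set.indicator_of_mem hmem _,
            show (a - b) * u = -(b * u) + a * u by ring, Real.exp_add]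
          ring
        · rw [Set.indicator_of_notMem
              (fun hc => hmem ⟨by linarith [hc.1], by linarith [hc.2]⟩),
            NeumannAux.nf_eq_zero η t p hmem]
          ring
    _ = ∫ u in Set.Ioi (0:ℝ) ∩ Set.Icc (-z) (t - z),
          a * ((z + u) ^ p * Real.exp (η * (z + u)) * Real.exp ((a - b) * u)) :=
        setIntegral_indicator measurableSet_Icc
    _ = ∫ u in Set.Ioc (0:ℝ) (t - z),
          a * ((z + u) ^ p * Real.exp (η * (z + u)) * Real.exp ((a - b) * u)) := by
        have hseq : Set.Ioi (0:ℝ) ∩ Set.Icc (-z) (t - z) = Set.Ioc (0:ℝ) (t - z) := by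
          ext u
          simp only [Set.mem_inter_iff, Set.mem_Ioi, Set.mem_Icc, Set.mem_Ioc]
          constructor
          · rintro ⟨h1, _, h3⟩; exact ⟨h1, h3⟩
          · rintro ⟨h1, h2⟩; exact ⟨h1, by linarith, h2⟩
        rw [hseq]
    _ = ∫ u in Set.Ioc (0:ℝ) (t - z),
          (a * Real.exp (η * z)) * ((z + u) ^ p * Real.exp ((η + a - b) * u)) := by
        refine setIntegral_congr_fun measurableSet_Ioc fun u _ => ?_
        rw [show η * (z + u) = η * z + η * u by ring, Real.exp_add,
          show (η + a - b) * u = η * u + (a - b) * u by ring, Real.exp_add]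
        ring
    _ = a * Real.exp (η * z) *
        ∫ y in (0:ℝ)..(t - z), (z + y) ^ p * Real.exp ((η + a - b) * y) := by
        rw [integral_const_mul, intervalIntegral.integral_of_le htz]
end

section
/- For 0 < a < b, the first moment of the Hawkes process with exponential kernel and baseline intensity ν = 1 equals E[X_t] = ∫_0^t κ_z^{(1)} dz = (b^2 t + a(e^{(a-b)t} - bt - 1))/(a-b)^2, where κ_z^{(1)} = b/(b-a) + (a/(a-b)) e^{(a-b)(t-z)}. -/
/-- For `0 < a < b`, the first moment of the Hawkes process with exponential kernel
`a e^{-bx}` and baseline intensity `ν = 1`, given by the cluster representation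
`E[X_t] = ∫_0^t κ_z⁽¹⁾ dz` with `κ_z⁽¹⁾ = b/(b-a) + (a/(a-b)) e^{(a-b)(t-z)}`, equals
`(b²t + a(e^{(a-b)t} - bt - 1))/(a-b)²`. -/
theorem hawkes_first_moment (a b t : ℝ) (ha : 0 < a) (hab : a < b) (ht : 0 ≤ t)
    (EX : ℝ)
    (hE : EX = ∫ z in (0:ℝ)..t,
      (b / (b - a) + a / (a - b) * Real.exp ((a - b) * (t - z)))) :
    EX = (b ^ 2 * t + a * (Real.exp ((a - b) * t) - b * t - 1)) / (a - b) ^ 2 := by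
  have hc : a - b ≠ 0 := by linarith
  have hc2 : b - a ≠ 0 := by linarith
  have hkey : (∫ z in (0:ℝ)..t,
      (b / (b - a) + a / (a - b) * Real.exp ((a - b) * (t - z)))) =
      (b / (b - a) * t - a / (a - b) ^ 2 * Real.exp ((a - b) * (t - t)))
      - (b / (b - a) * 0 - a / (a - b) ^ 2 * Real.exp ((a - b) * (t - 0))) := by
    apply intervalIntegral.integral_eq_sub_of_hasDerivAt
      (f := fun z => b / (b - a) * z - a / (a - b) ^ 2 * Real.exp ((a - b) * (t - z)))
    · intro z hz
      have h1 : HasDerivAt (fun z : ℝ => (a - b) * (t - z)) (-(a - b)) z := by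
        have := ((hasDerivAt_id z).const_sub t).const_mul (a - b)
        simpa using this
      have h2 : HasDerivAt (fun z : ℝ => Real.exp ((a - b) * (t - z)))
          (Real.exp ((a - b) * (t - z)) * -(a - b)) z := h1.exp
      have h3 := ((hasDerivAt_id z).const_mul (b / (b - a))).sub
        (h2.const_mul (a / (a - b) ^ 2))
      convert h3 using 1
      · rfl
      field_simp
      ring
    · apply Continuous.intervalIntegrable
      continuity
  rw [hE, hkey]
  simp only [sub_self, sub_zero, mul_zero, Real.exp_zero]
  field_simp
  ring
end
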